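/- If a pair (ω,x) is recurrently Lyapunov stable and locally attractive in the naïve sense, then it is asymptotically stable; conversely, if (ω,x) is asymptotically stable then it is Lyapunov stable and locally attractive in the naïve sense. -/

import Mathlib

open Filter Topology

section

variable {Ω X : Type*} [MetricSpace X]

/-- `(ω,x)` is `(ε,δ)`-contained. -/
def contained (φ : ℕ → Ω → X → X) (ε δ : ℝ) (ω : Ω) (x : X) : Prop :=
  ∀ y : X, dist x y ≤ δ → ∀ t : ℕ, dist (φ t ω x) (φ t ω y) ≤ ε

/-- `(ω,x)` is Lyapunov stable. -/
def lyapStable (φ : ℕ → Ω → X → X) (ω : Ω) (x : X) : Prop :=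
  ∀ ε > (0 : ℝ), ∃ δ, 0 < δ ∧ δ ≤ ε ∧ contained φ ε δ ω x

/-- `(ω,x)` is recurrently Lyapunov stable: for each `ε` there is `δ` such that the set of
times `t` at which the shifted pair `Θ^t(ω,x) = (θ^t ω, φ(t,ω)x)` is `(ε,δ)`-contained is
unbounded. -/
def recLyapStable (φ : ℕ → Ω → X → X) (θ : ℕ → Ω → Ω) (ω : Ω) (x : X) : Prop :=
  ∀ ε > (0 : ℝ), ∃ δ, 0 < δ ∧ δ ≤ ε ∧
    ∀ N : ℕ, ∃ t ≥ N, contained φ ε δ (θ t ω) (φ t ω x)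

/-- `(ω,x)` is locally attractive in the naïve sense. -/
def naiveAttractive (φ : ℕ → Ω → X → X) (ω : Ω) (x : X) : Prop :=
  ∃ U ∈ 𝓝 x, ∀ y ∈ U, Tendsto (fun t => dist (φ t ω x) (φ t ω y)) atTop (𝓝 0)

/-- `(ω,x)` is asymptotically stable. -/
def asympStable (φ : ℕ → Ω → X → X) (ω : Ω) (x : X) : Prop :=
  ∃ U ∈ 𝓝 x, Tendsto (fun t => EMetric.diam (φ t ω '' U)) atTop (𝓝 0)

end

/-- Theorem A11: (I) a recurrently Lyapunov stable pair which is locally attractive in the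
naïve sense is asymptotically stable; (II) an asymptotically stable pair is Lyapunov
stable and locally attractive in the naïve sense. -/
theorem stmt18 {Ω X : Type*} [MetricSpace X] [CompactSpace X]
    (θ : ℕ → Ω → Ω) (φ : ℕ → Ω → X → X)
    (hcont : ∀ t ω, Continuous (φ t ω))
    (hφ0 : ∀ ω, φ 0 ω = id)
    (hcocycle : ∀ s t ω, φ (s + t) ω = φ t (θ s ω) ∘ φ s ω)
    (ω : Ω) (x : X) :
    (recLyapStable φ θ ω x → naiveAttractive φ ω x → asympStable φ ω x) ∧
    (asympStable φ ω x → lyapStable φ ω x ∧ naiveAttractive φ ω x) := by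
  constructor
  · -- Part I
    intro hrls hna
    obtain ⟨U, hU, hattr⟩ := hna
    obtain ⟨r, hr, hsub⟩ := Metric.nhds_basis_closedBall.mem_iff.mp hU
    set K : Set X := Metric.closedBall x r with hK
    have hKU : K ⊆ U := hsub
    have hKc : IsCompact K := Metric.isClosed_closedBall.isCompact
    have key : ∀ ε : ℝ, 0 < ε → ∃ N : ℕ, ∀ u ≥ N, ∀ z ∈ K,
        dist (φ u ω x) (φ u ω z) ≤ ε := by
      intro ε hε
      obtain ⟨δ, hδ, -, hrec⟩ := hrls ε hε
      have hy : ∀ y ∈ K, ∃ s : ℕ, contained φ ε δ (θ s ω) (φ s ω x) ∧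
          dist (φ s ω x) (φ s ω y) ≤ δ / 2 := by
        intro y hyK
        have htd := hattr y (hKU hyK)
        have hev : ∀ᶠ t in atTop, dist (φ t ω x) (φ t ω y) < δ / 2 :=
          htd.eventually_lt_const (by positivity)
        obtain ⟨T, hT⟩ := eventually_atTop.mp hev
        obtain ⟨s, hsT, hconS⟩ := hrec T
        exact ⟨s, hconS, (hT s hsT).le⟩
      choose! s hcon hclose using hy
      set W : X → Set X := fun y => (φ (s y) ω) ⁻¹' Metric.ball (φ (s y) ω y) (δ / 2) with hW
      have hWnhds : ∀ y ∈ K, W y ∈ 𝓝 y := by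
        intro y _
        exact (hcont (s y) ω).continuousAt.preimage_mem_nhds
          (Metric.ball_mem_nhds _ (by positivity))
      obtain ⟨F, hFK, hFcov⟩ := hKc.elim_nhds_subcover W hWnhds
      refine ⟨F.sup s, fun u hu z hz => ?_⟩
      obtain ⟨y, hyF, hzW⟩ := Set.mem_iUnion₂.mp (hFcov hz)
      have hyK := hFK y hyF
      have hle : s y ≤ u := le_trans (Finset.le_sup hyF) hu
      have hzW' : dist (φ (s y) ω y) (φ (s y) ω z) < δ / 2 := Metric.mem_ball'.mp hzW
      have hd : dist (φ (s y) ω x) (φ (s y) ω z) ≤ δ := by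
        calc dist (φ (s y) ω x) (φ (s y) ω z)
            ≤ dist (φ (s y) ω x) (φ (s y) ω y) + dist (φ (s y) ω y) (φ (s y) ω z) :=
              dist_triangle _ _ _
          _ ≤ δ / 2 + δ / 2 := add_le_add (hclose y hyK) hzW'.le
          _ = δ := by ring
      have hmain := hcon y hyK (φ (s y) ω z) hd (u - s y)
      have hu' : s y + (u - s y) = u := Nat.add_sub_cancel' hle
      have hc := hcocycle (s y) (u - s y) ω
      rw [hu'] at hc
      rw [hc]
      exact hmain
    refine ⟨K, Metric.closedBall_mem_nhds x hr, ?_⟩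
    rw [ENNReal.tendsto_atTop_zero]
    intro ε hε
    set e : ENNReal := min 1 ε with he
    have he0 : 0 < e := lt_min one_pos hε
    have heT : e ≠ ⊤ := ne_top_of_le_ne_top ENNReal.one_ne_top (min_le_left _ _)
    have her : 0 < e.toReal := ENNReal.toReal_pos he0.ne' heT
    obtain ⟨N, hN⟩ := key (e.toReal / 2) (by positivity)
    refine ⟨N, fun u hu => ?_⟩
    refine le_trans (EMetric.diam_le ?_) (min_le_right 1 ε)
    rintro a ⟨z, hz, rfl⟩ b ⟨w, hw, rfl⟩
    rw [edist_dist]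
    refine le_trans (ENNReal.ofReal_le_ofReal ?_) (le_of_eq (ENNReal.ofReal_toReal heT))
    calc dist (φ u ω z) (φ u ω w)
        ≤ dist (φ u ω z) (φ u ω x) + dist (φ u ω x) (φ u ω w) := dist_triangle _ _ _
      _ ≤ e.toReal / 2 + e.toReal / 2 :=
          add_le_add (by rw [dist_comm]; exact hN u hu z hz) (hN u hu w hw)
      _ = e.toReal := by ring
  · -- Part II
    rintro ⟨U, hU, hdiam⟩
    have hxU : x ∈ U := mem_of_mem_nhds hU
    constructor
    · intro ε hε
      obtain ⟨r, hr, hsub⟩ := Metric.nhds_basis_closedBall.mem_iff.mp hU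
      have hev : ∀ᶠ t in atTop, EMetric.diam (φ t ω '' U) < ENNReal.ofReal ε :=
        hdiam.eventually_lt_const (by simpa using hε)
      obtain ⟨T, hT⟩ := eventually_atTop.mp hev
      have hc : ∀ t : ℕ, ∃ d : ℝ, 0 < d ∧
          ∀ y, dist x y ≤ d → dist (φ t ω x) (φ t ω y) ≤ ε := by
        intro t
        have hca : ContinuousAt (φ t ω) x := (hcont t ω).continuousAt
        rw [Metric.continuousAt_iff] at hca
        obtain ⟨d, hd, hdd⟩ := hca ε hε
        refine ⟨d / 2, by positivity, fun y hy => ?_⟩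
        have : dist y x < d := by rw [dist_comm]; linarith
        have := hdd this
        rw [dist_comm]
        exact this.le
      choose d hd0 hd using hc
      set δ : ℝ := min (min ε r) ((Finset.range (T + 1)).inf' (by simp) d) with hδdef
      have hδ0 : 0 < δ := by
        refine lt_min (lt_min hε hr) ?_
        rw [Finset.lt_inf'_iff]
        exact fun t _ => hd0 t
      refine ⟨δ, hδ0, le_trans (min_le_left _ _) (min_le_left _ _), ?_⟩
      intro y hy t
      have hyU : y ∈ U := by
        apply hsub
        rw [Metric.mem_closedBall, dist_comm]
        exact le_trans hy (le_trans (min_le_left _ _) (min_le_right _ _))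
      rcases le_or_gt t T with h | h
      · refine hd t y (le_trans hy ?_)
        exact le_trans (min_le_right _ _)
          (Finset.inf'_le d (Finset.mem_range.mpr (Nat.lt_succ_of_le h)))
      · have hdi := hT t h.le
        have h1 : edist (φ t ω x) (φ t ω y) ≤ EMetric.diam (φ t ω '' U) :=
          EMetric.edist_le_diam_of_mem ⟨x, hxU, rfl⟩ ⟨y, hyU, rfl⟩
        have h2 : ENNReal.ofReal (dist (φ t ω x) (φ t ω y)) ≤ ENNReal.ofReal ε := by
          rw [← edist_dist]; exact le_of_lt (lt_of_le_of_lt h1 hdi)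
        exact (ENNReal.ofReal_le_ofReal_iff hε.le).mp h2
    · refine ⟨U, hU, fun y hy => ?_⟩
      have h1 : Tendsto (fun t => edist (φ t ω x) (φ t ω y)) atTop (𝓝 0) := by
        apply tendsto_of_tendsto_of_tendsto_of_le_of_le tendsto_const_nhds hdiam
        · exact fun t => zero_le
        · exact fun t => EMetric.edist_le_diam_of_mem ⟨x, hxU, rfl⟩ ⟨y, hy, rfl⟩
      have h2 := (ENNReal.tendsto_toReal (by simp : (0 : ENNReal) ≠ ⊤)).comp h1
      simpa [Function.comp_def, dist_edist] using h2
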